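/- Let g be a compact Lie algebra of rank two and h a simple rank-one subalgebra of g that is not regular. Then the centralizer of h in g is trivial: c_g(h) = {0}. -/

import Mathlib

open Module

/-- A real Lie algebra is *compact* if it admits an ad-invariant inner product. -/
def IsCompactLieAlgebra (g : Type*) [LieRing g] [LieAlgebra ℝ g] : Prop :=
  ∃ Φ : g →ₗ[ℝ] g →ₗ[ℝ] ℝ,
    (∀ x : g, x ≠ 0 → 0 < Φ x x) ∧ (∀ x y : g, Φ x y = Φ y x) ∧
    (∀ x y z : g, Φ ⁅x, y⁆ z = - Φ y ⁅x, z⁆)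

/-- A Cartan subalgebra of a compact Lie algebra: a maximal abelian Lie subalgebra. -/
def IsMaxAbelian {g : Type*} [LieRing g] [LieAlgebra ℝ g] (t : LieSubalgebra ℝ g) : Prop :=
  IsLieAbelian ↥t ∧ ∀ t' : LieSubalgebra ℝ g, IsLieAbelian ↥t' → t ≤ t' → t' = t

-- existence of a maximal abelian subalgebra containing a given abelian one
lemma exists_maxAbelian {g : Type*} [LieRing g] [LieAlgebra ℝ g] [FiniteDimensional ℝ g]
    (s : LieSubalgebra ℝ g) (hab : IsLieAbelian ↥s) :
    ∃ t : LieSubalgebra ℝ g, (IsLieAbelian ↥t ∧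
      ∀ t' : LieSubalgebra ℝ g, IsLieAbelian ↥t' → t ≤ t' → t' = t) ∧ s ≤ t := by
  classical
  set P : ℕ → Prop := fun d => ∃ t : LieSubalgebra ℝ g, IsLieAbelian ↥t ∧ s ≤ t ∧
    finrank ℝ t = d with hP
  have hs0 : P (finrank ℝ s) := ⟨s, hab, le_refl s, rfl⟩
  have hble : ∀ d, P d → d ≤ finrank ℝ g := by
    rintro d ⟨t, -, -, rfl⟩
    exact Submodule.finrank_le t.toSubmodule
  have hspec : P (Nat.findGreatest P (finrank ℝ g)) :=
    Nat.findGreatest_spec (hble _ hs0) hs0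
  obtain ⟨t, htab, hst, htd⟩ := hspec
  refine ⟨t, ⟨htab, ?_⟩, hst⟩
  intro t' hab' htt'
  have h1 : finrank ℝ t' ≤ finrank ℝ t := by
    rw [htd]
    refine Nat.le_findGreatest ?_ ⟨t', hab', le_trans hst htt', rfl⟩
    exact Submodule.finrank_le t'.toSubmodule
  have := Submodule.eq_of_le_of_finrank_le (S₁ := t.toSubmodule) (S₂ := t'.toSubmodule)
    htt' h1
  exact LieSubalgebra.toSubmodule_injective this.symm


lemma span_pair_bracket {g : Type*} [LieRing g] [LieAlgebra ℝ g] (X Y : g)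
    (hXY : ⁅X, Y⁆ = 0) :
    ∀ a ∈ Submodule.span ℝ {X, Y}, ∀ b ∈ Submodule.span ℝ {X, Y}, ⁅a, b⁆ = (0 : g) := by
  intro a ha b hb
  obtain ⟨s, t, rfl⟩ := Submodule.mem_span_pair.mp ha
  obtain ⟨u, v, rfl⟩ := Submodule.mem_span_pair.mp hb
  have hYX : ⁅Y, X⁆ = 0 := by rw [← lie_skew, hXY, neg_zero]
  simp [lie_smul, smul_lie, hXY, hYX]

/-- If `g` is a compact Lie algebra of rank two and `h` a simple rank-one subalgebra of `g`
that is not regular, then the centralizer of `h` in `g` is trivial. -/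
theorem centralizer_trivial_of_nonregular (g : Type*) [LieRing g] [LieAlgebra ℝ g]
    [FiniteDimensional ℝ g] (hcpt : IsCompactLieAlgebra g)
    (hrank : ∀ t : LieSubalgebra ℝ g, IsMaxAbelian t → finrank ℝ t = 2)
    (h : LieSubalgebra ℝ g) (hs : LieAlgebra.IsSimple ℝ ↥h)
    (hrk1 : ∀ t : LieSubalgebra ℝ ↥h, IsMaxAbelian t → finrank ℝ t = 1)
    (hnotreg : ¬ ∃ t : LieSubalgebra ℝ g, IsMaxAbelian t ∧ t ≤ h.normalizer) :
    ∀ X : g, (∀ Y ∈ h, ⁅X, Y⁆ = 0) → X = 0 := by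
  intro X hX
  by_contra hX0
  -- elements of the center of h are zero
  have hcent : ∀ Y : ↥h, (∀ Z : ↥h, ⁅Z, Y⁆ = 0) → Y = 0 := by
    intro Y hY
    have hmem : Y ∈ LieAlgebra.center ℝ ↥h := by
      rw [LieModule.mem_maxTrivSubmodule]; exact hY
    rwa [LieAlgebra.center_eq_bot, LieSubmodule.mem_bot] at hmem
  -- h contains a nonzero element
  obtain ⟨H, hHh, hH0⟩ : ∃ H ∈ h, H ≠ 0 := by
    by_contra hc
    push_neg at hc
    have : Subsingleton ↥h := ⟨fun a b => Subtype.ext (by rw [hc a a.2, hc b b.2])⟩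
    exact hs.non_abelian ⟨fun a b => Subsingleton.elim _ _⟩
  have hXH : ⁅X, H⁆ = 0 := hX H hHh
  have key := span_pair_bracket X H hXH
  -- the span of X and H is an abelian Lie subalgebra
  set s : LieSubalgebra ℝ g :=
    { Submodule.span ℝ {X, H} with
      lie_mem' := fun {a b} ha hb => by
        have : ⁅a, b⁆ = 0 := key a ha b hb
        rw [this]; exact Submodule.zero_mem _ } with hsdef
  have hsmem : ∀ z, z ∈ s ↔ z ∈ Submodule.span ℝ {X, H} := fun z => Iff.rfl
  have hsab : IsLieAbelian ↥s :=
    ⟨fun a b => Subtype.ext (key a.1 a.2 b.1 b.2)⟩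
  -- X, H are linearly independent
  have hli : LinearIndependent ℝ ![X, H] := by
    rw [LinearIndependent.pair_iff]
    intro a b hab
    rcases eq_or_ne b 0 with hb | hb
    · subst hb
      rcases eq_or_ne a 0 with ha | ha
      · exact ⟨ha, rfl⟩
      · exact absurd (by simpa [ha] using hab) hX0
    · exfalso
      apply hH0
      have hHX : H = (-(b⁻¹ * a)) • X := by
        have : b • H = -(a • X) := by linear_combination (norm := module) hab
        have := congrArg (fun z => b⁻¹ • z) this
        simpa [smul_smul, hb, mul_comm, mul_assoc, neg_smul] using this
      have : ∀ Z : ↥h, ⁅Z, (⟨H, hHh⟩ : ↥h)⁆ = 0 := by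
        intro Z
        apply Subtype.ext
        have hcoe : (⁅Z, (⟨H, hHh⟩ : ↥h)⁆ : ↥h).1 = ⁅(Z : g), H⁆ := rfl
        rw [hcoe, ← lie_skew, hHX]
        simp [smul_lie, hX Z.1 Z.2]
      have := hcent _ this
      simpa using congrArg Subtype.val this
  -- finrank of s is 2
  have hs2 : finrank ℝ s = 2 := by
    have : Set.range ![X, H] = {X, H} := by
      ext z
      simp [Fin.exists_fin_two]
      tauto
    have h2 := finrank_span_eq_card hli
    rw [this] at h2
    exact h2
  -- extend to a maximal abelian subalgebra
  obtain ⟨t, htmax, hst⟩ := exists_maxAbelian s hsab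
  have ht2 : finrank ℝ t = 2 := hrank t htmax
  have hts : t = s := by
    apply LieSubalgebra.toSubmodule_injective
    exact (Submodule.eq_of_le_of_finrank_le (S₁ := s.toSubmodule) (S₂ := t.toSubmodule)
      hst (le_of_eq (ht2.trans hs2.symm))).symm
  -- t lies in the normalizer of h, contradiction
  apply hnotreg
  refine ⟨t, htmax, ?_⟩
  rw [hts]
  intro z hz
  rw [hsmem] at hz
  obtain ⟨a, b, rfl⟩ := Submodule.mem_span_pair.mp hz
  rw [LieSubalgebra.mem_normalizer_iff]
  intro y hy
  rw [add_lie, smul_lie, smul_lie, hX y hy, smul_zero]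
  exact h.add_mem (h.zero_mem) (h.smul_mem b (h.lie_mem hHh hy))
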